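/- Let G be a finite simple graph, let H be a set of vertices of G, let c be a (3,0,0)-coloring of the induced subgraph G−H, and let v ∈ H have exactly two neighbors u and w in G−H, where u has degree at most 5 in G and w is nicely colored. Then there is a (3,0,0)-coloring of the induced subgraph G−(H∖{v}) that agrees with c except possibly at u, in which v is colored 1 and nicely colored. -/

import Mathlib

/-- A coloring `f` (with colors `0,1,2` standing for `1,2,3`) of the subgraph of `G`
induced on the set `s` is a partial coloring with deficiency vector `d` if every
vertex of `s` colored `i` has at most `d i` neighbors in `s` of the same color.
With `d = ![3,0,0]` this is a `(3,0,0)`-coloring of the induced subgraph `G[s]`. -/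
def IsPartialCol {V : Type*} (G : SimpleGraph V) (s : Set V) (d : Fin 3 → ℕ)
    (f : V → Fin 3) : Prop :=
  ∀ v ∈ s, {u | u ∈ s ∧ G.Adj v u ∧ f u = f v}.ncard ≤ d (f v)

/-- In a partial `(3,0,0)`-coloring on `s`, a vertex `w` is nicely colored if it is
colored `1` (here color `0`) and has at most two neighbors colored `1`, or it is
colored `2` or `3` and has no neighbor of its own color. -/
def NicelyCol {V : Type*} (G : SimpleGraph V) (s : Set V) (f : V → Fin 3)
    (w : V) : Prop :=
  (f w = 0 ∧ {u | u ∈ s ∧ G.Adj w u ∧ f u = 0}.ncard ≤ 2) ∨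
  (f w ≠ 0 ∧ ∀ u ∈ s, G.Adj w u → f u ≠ f w)

/-- Let `H` be a set of vertices of a finite simple graph `G`, let `c` be a
`(3,0,0)`-coloring of `G − H`, and let `v ∈ H` have exactly two neighbors `u` and `w`
in `G − H`, where `u` has degree at most 5 in `G` and `w` is nicely colored.  Then
there is a `(3,0,0)`-coloring of `G − (H \ {v})` agreeing with `c` except possibly at
`u`, in which `v` is colored `1` and nicely colored. -/
theorem stmt13 {V : Type*} [Fintype V] (G : SimpleGraph V) [DecidableRel G.Adj]
    (H : Set V) (c : V → Fin 3) (hc : IsPartialCol G Hᶜ ![3, 0, 0] c)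
    (v : V) (hv : v ∈ H) (u w : V) (hu : u ∈ Hᶜ) (hw : w ∈ Hᶜ) (huw : u ≠ w)
    (hN : {x | x ∈ Hᶜ ∧ G.Adj v x} = {u, w})
    (hdu : G.degree u ≤ 5) (hwn : NicelyCol G Hᶜ c w) :
    ∃ c' : V → Fin 3,
      IsPartialCol G (Hᶜ ∪ {v}) ![3, 0, 0] c' ∧
      (∀ x ∈ Hᶜ, x ≠ u → c' x = c x) ∧
      c' v = 0 ∧ NicelyCol G (Hᶜ ∪ {v}) c' v := by
  classical
  have hvH : v ∉ Hᶜ := fun h => h hv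
  have hu' : u ∈ {x | x ∈ Hᶜ ∧ G.Adj v x} := by rw [hN]; exact Or.inl rfl
  have hw' : w ∈ {x | x ∈ Hᶜ ∧ G.Adj v x} := by rw [hN]; exact Or.inr rfl
  have hadju : G.Adj v u := hu'.2
  have hadjw : G.Adj v w := hw'.2
  have hnbr : ∀ x, x ∈ Hᶜ → G.Adj v x → x = u ∨ x = w := by
    intro x hx hax
    have : x ∈ ({u, w} : Set V) := hN ▸ ⟨hx, hax⟩
    simpa using this
  have hvu : v ≠ u := fun h => hvH (h ▸ hu)
  have hvw : v ≠ w := fun h => hvH (h ▸ hw)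
  set Z : Set V := {y | y ∈ Hᶜ ∧ G.Adj u y ∧ c y = 0} with hZdef
  -- choose the color `i` for `u`
  obtain ⟨i, hq3, hq1, hq2⟩ :
      ∃ i : Fin 3, (i = 0 → c u = 0) ∧ (i = 0 → Z.ncard ≤ 2) ∧
        (i ≠ 0 → ∀ y ∈ Hᶜ, G.Adj u y → c y ≠ i) := by
    by_cases h0 : c u = 0
    · by_cases h3 : Z.ncard ≤ 2
      · exact ⟨0, fun _ => h0, fun _ => h3, fun h => absurd rfl h⟩
      · -- case B: `c u = 0` and `u` already has 3 zero-colored neighbors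
        have hZ3 : Z.ncard = 3 := by
          have hle := hc u hu
          rw [h0] at hle
          have hle3 : Z.ncard ≤ 3 := by simpa [hZdef] using hle
          omega
        set T : Set V := {y | y ∈ Hᶜ ∧ G.Adj u y ∧ c y ≠ 0} with hTdef
        have hT1 : T.ncard ≤ 1 := by
          have hsub : insert v (Z ∪ T) ⊆ G.neighborSet u := by
            rintro y (rfl | hy | hy)
            · exact hadju.symm
            · exact hy.2.1
            · exact hy.2.1
          have hvni : v ∉ Z ∪ T := by
            rintro (hy | hy) <;> exact hvH hy.1
          have hdisj : Disjoint Z T := by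
            rw [Set.disjoint_left]
            rintro y hy hy'
            exact hy'.2.2 hy.2.2
          have hcard1 : (insert v (Z ∪ T)).ncard = Z.ncard + T.ncard + 1 := by
            rw [Set.ncard_insert_of_notMem hvni, Set.ncard_union_eq hdisj]
          have hcard2 : (G.neighborSet u).ncard = G.degree u := by
            rw [Set.ncard_eq_toFinset_card']
            simp [SimpleGraph.degree, SimpleGraph.neighborFinset]
          have := Set.ncard_le_ncard hsub (Set.toFinite _)
          rw [hcard1, hcard2] at this
          omega
        by_cases h1 : ∀ y ∈ T, c y ≠ 1
        · refine ⟨1, by simp, by simp, fun _ y hy hadj hcy => ?_⟩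
          by_cases hy0 : c y = 0
          · simp [hy0] at hcy
          · exact h1 y ⟨hy, hadj, hy0⟩ hcy
        · push_neg at h1
          obtain ⟨y0, hy0T, hy0c⟩ := h1
          refine ⟨2, by simp, by simp, fun _ y hy hadj hcy => ?_⟩
          by_cases hyz : c y = 0
          · simp [hyz] at hcy
          · have hyT : y ∈ T := ⟨hy, hadj, hyz⟩
            have : y = y0 := (Set.ncard_le_one (Set.toFinite _)).mp hT1 y hyT y0 hy0T
            rw [this, hy0c] at hcy
            exact absurd hcy (by decide)
    · -- case A2: `c u ≠ 0`
      refine ⟨c u, fun h => absurd h h0, fun h => absurd h h0, fun _ y hy hadj hcy => ?_⟩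
      have hle := hc u hu
      have hd0 : (![3, 0, 0] : Fin 3 → ℕ) (c u) = 0 := by
        rcases (by omega : c u = 1 ∨ c u = 2) with h | h <;> rw [h] <;> rfl
      rw [hd0, Nat.le_zero, Set.ncard_eq_zero (Set.toFinite _)] at hle
      exact absurd ⟨hy, hadj, hcy⟩ (hle ▸ Set.notMem_empty y)
  -- the new coloring
  set c' : V → Fin 3 := fun x => if x = v then 0 else if x = u then i else c x with hc'def
  have hc'v : c' v = 0 := by simp [hc'def]
  have hc'u : c' u = i := by simp [hc'def, hvu.symm]
  have hc'x : ∀ x, x ≠ v → x ≠ u → c' x = c x := by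
    intro x h1 h2; simp [hc'def, h1, h2]
  have hd3 : (![3, 0, 0] : Fin 3 → ℕ) 0 = 3 := rfl
  have hpair2 : ({u, w} : Set V).ncard = 2 := Set.ncard_pair huw
  refine ⟨c', ?_, ?_, hc'v, ?_⟩
  · -- IsPartialCol
    intro x hx
    by_cases hxv : x = v
    · rw [hxv, hc'v, hd3]
      have hsub : {y | y ∈ Hᶜ ∪ {v} ∧ G.Adj v y ∧ c' y = 0} ⊆ ({u, w} : Set V) := by
        rintro y ⟨hy1, hy2, hy3⟩
        rcases hy1 with hy1 | hy1
        · exact hnbr y hy1 hy2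
        · exact absurd (hy1 ▸ hy2) (G.irrefl)
      have := Set.ncard_le_ncard hsub (Set.toFinite _)
      rw [hpair2] at this
      omega
    · have hxH : x ∈ Hᶜ := by
        rcases hx with h | h
        · exact h
        · exact absurd h hxv
      by_cases hxu : x = u
      · rw [hxu, hc'u]
        by_cases hi0 : i = 0
        · -- `u` colored 0: neighbors colored 0 are `Z` plus possibly `v`
          rw [hi0, hd3]
          have hsub : {y | y ∈ Hᶜ ∪ {v} ∧ G.Adj u y ∧ c' y = 0} ⊆ insert v Z := by
            rintro y ⟨hy1, hy2, hy3⟩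
            by_cases hyv : y = v
            · exact Or.inl hyv
            · have hyH : y ∈ Hᶜ := by
                rcases hy1 with h | h
                · exact h
                · exact absurd h hyv
              have hyu : y ≠ u := fun h => G.irrefl (h ▸ hy2)
              rw [hc'x y hyv hyu] at hy3
              exact Or.inr ⟨hyH, hy2, hy3⟩
          have h1 := Set.ncard_le_ncard hsub (Set.toFinite _)
          have h2 := Set.ncard_insert_le v Z
          have h3 := hq1 hi0
          omega
        · -- `u` colored nonzero: no same-colored neighbor
          have hemp : {y | y ∈ Hᶜ ∪ {v} ∧ G.Adj u y ∧ c' y = i} = ∅ := by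
            ext y
            simp only [Set.mem_setOf_eq, Set.mem_empty_iff_false, iff_false]
            rintro ⟨hy1, hy2, hy3⟩
            by_cases hyv : y = v
            · rw [hyv, hc'v] at hy3
              exact hi0 hy3.symm
            · have hyH : y ∈ Hᶜ := by
                rcases hy1 with h | h
                · exact h
                · exact absurd h hyv
              have hyu : y ≠ u := fun h => G.irrefl (h ▸ hy2)
              rw [hc'x y hyv hyu] at hy3
              exact hq2 hi0 y hyH hy2 hy3
          rw [hemp, Set.ncard_empty]
          exact Nat.zero_le _
      · -- `x ∈ Hᶜ`, `x ≠ u`, `x ≠ v`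
        have hcx : c' x = c x := hc'x x hxv hxu
        have hxu' : ∀ y, y ∈ {y | y ∈ Hᶜ ∪ {v} ∧ G.Adj x y ∧ c' y = c' x} → y ≠ v →
            y ∈ {y | y ∈ Hᶜ ∧ G.Adj x y ∧ c y = c x} := by
          rintro y ⟨hy1, hy2, hy3⟩ hyv
          have hyH : y ∈ Hᶜ := by
            rcases hy1 with h | h
            · exact h
            · exact absurd h hyv
          refine ⟨hyH, hy2, ?_⟩
          by_cases hyu : y = u
          · rw [hyu, hc'u, hcx] at hy3
            by_cases hi0 : i = 0
            · rw [hyu, hq3 hi0, ← hy3, hi0]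
            · have hadjux : G.Adj u x := (hyu ▸ hy2).symm
              exact absurd hy3.symm (hq2 hi0 x hxH hadjux)
          · rw [hc'x y hyv hyu, hcx] at hy3
            exact hy3
        have hmain := hc x hxH
        have hbnd : (![3, 0, 0] : Fin 3 → ℕ) (c' x) = ![3, 0, 0] (c x) := by rw [hcx]
        rw [hbnd]
        by_cases hxw : x = w
        · by_cases hw0 : c x = 0
          · -- `w` colored 0 and nicely colored: at most 2 before, so at most 3 now
            have hnice : {y | y ∈ Hᶜ ∧ G.Adj x y ∧ c y = c x}.ncard ≤ 2 := by
              rcases hwn with ⟨_, h⟩ | ⟨h, _⟩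
              · have hw0' : c w = 0 := hxw ▸ hw0
                rw [hxw, hw0']
                exact h
              · exact absurd (hxw ▸ hw0) h
            have hsub : {y | y ∈ Hᶜ ∪ {v} ∧ G.Adj x y ∧ c' y = c' x} ⊆
                insert v {y | y ∈ Hᶜ ∧ G.Adj x y ∧ c y = c x} := by
              intro y hy
              by_cases hyv : y = v
              · exact Or.inl hyv
              · exact Or.inr (hxu' y hy hyv)
            have h1 := Set.ncard_le_ncard hsub (Set.toFinite _)
            have h2 := Set.ncard_insert_le v {y | y ∈ Hᶜ ∧ G.Adj x y ∧ c y = c x}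
            rw [hw0, hd3]
            omega
          · -- `w` colored nonzero: `v` is not in its same-colored set
            have hsub : {y | y ∈ Hᶜ ∪ {v} ∧ G.Adj x y ∧ c' y = c' x} ⊆
                {y | y ∈ Hᶜ ∧ G.Adj x y ∧ c y = c x} := by
              intro y hy
              by_cases hyv : y = v
              · obtain ⟨_, _, hy3⟩ := hy
                rw [hyv, hc'v, hcx] at hy3
                exact absurd hy3.symm hw0
              · exact hxu' y hy hyv
            exact (Set.ncard_le_ncard hsub (Set.toFinite _)).trans hmain
        · -- `x` is not adjacent to `v`
          have hsub : {y | y ∈ Hᶜ ∪ {v} ∧ G.Adj x y ∧ c' y = c' x} ⊆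
              {y | y ∈ Hᶜ ∧ G.Adj x y ∧ c y = c x} := by
            intro y hy
            by_cases hyv : y = v
            · obtain ⟨_, hy2, _⟩ := hy
              rw [hyv] at hy2
              rcases hnbr x hxH hy2.symm with h | h
              · exact absurd h hxu
              · exact absurd h hxw
            · exact hxu' y hy hyv
          exact (Set.ncard_le_ncard hsub (Set.toFinite _)).trans hmain
  · -- agrees with `c` off `u`
    intro x hx hxu
    exact hc'x x (fun h => hvH (h ▸ hx)) hxu
  · -- `v` nicely colored
    left
    refine ⟨hc'v, ?_⟩
    have hsub : {y | y ∈ Hᶜ ∪ {v} ∧ G.Adj v y ∧ c' y = 0} ⊆ ({u, w} : Set V) := by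
      rintro y ⟨hy1, hy2, hy3⟩
      rcases hy1 with hy1 | hy1
      · exact hnbr y hy1 hy2
      · exact absurd (hy1 ▸ hy2) (G.irrefl)
    have := Set.ncard_le_ncard hsub (Set.toFinite _)
    rw [hpair2] at this
    exact this
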